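/- Let k be a field of characteristic 3, R = k[Y, Z], q = Z² − Y⁴, and let L = R[1/(Y·q)] be the localization of R at the powers of Y·q. Let w = τ(Z³·q^{−1}·Y^{−3}) ∈ W(L) (3-typical Witt vectors). Then there exist u, v ∈ W(L) such that every coefficient of u lies in the image of R[1/q] in L, every coefficient of v lies in the image of R[1/Y] in L, and the Witt vector w + V(τ(Z·q^{−1}·Y^{−1})) − u − v has vanishing coefficients in degrees 0 and 1. (This is the computation showing that the pullback of the generating local cohomology class along the α₃-quotient with an E₆^0 singularity, given by x = Z² − Y⁴, y = Y³, z = Z³, satisfies π*(ε, 0) ≡ V(−Z/(xY)) in W₂ modulo W₂(B[1/x]) + W₂(B[1/y]).) -/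
import Mathlib

open MvPolynomial

private lemma myRatZero (Φ : MvPolynomial (Fin 2) ℚ) :
    wittStructureRat 3 Φ 0 = bind₁ (fun i => (X (i,0) : MvPolynomial (Fin 2 × ℕ) ℚ)) Φ := by
  have h := wittStructureRat_prop 3 Φ 0
  simpa [wittPolynomial_zero, bind₁_X_right, rename_X] using h

private lemma myWittAddOne :
    (WittVector.wittAdd 3 1 : MvPolynomial (Fin 2 × ℕ) ℤ) =
      X (0,1) + X (1,1) - X (0,0)^2 * X (1,0) - X (0,0) * X (1,0)^2 := by
  apply MvPolynomial.map_injective (Int.castRingHom ℚ) Int.cast_injective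
  rw [WittVector.wittAdd, map_wittStructureInt]
  apply mul_right_cancel₀
    (b := (C (((3:ℕ):ℚ)^1) : MvPolynomial (Fin 2 × ℕ) ℚ)) (by norm_num [C_eq_zero])
  rw [wittStructureRat_rec_aux]
  simp only [Finset.sum_range_one, myRatZero, wittPolynomial_one, map_add, bind₁_X_right,
    rename_C, rename_X, map_pow, map_mul, map_sub, MvPolynomial.map_X, pow_zero, pow_one]
  push_cast
  ring_nf
  simp only [map_ofNat, C_1]
  ring

private lemma myAddCoeffOne {L : Type} [CommRing L] (x y : WittVector 3 L) :
    (x + y).coeff 1 = x.coeff 1 + y.coeff 1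
      - x.coeff 0 ^ 2 * y.coeff 0 - x.coeff 0 * y.coeff 0 ^ 2 := by
  rw [WittVector.add_coeff, myWittAddOne]
  simp [WittVector.peval, Function.uncurry]

private def locSubring {R L : Type} [CommRing R] [CommRing L] (ι : R →+* L) (g : R) :
    Subring L where
  carrier := {x | ∃ (s : R) (t : ℕ), x * ι g ^ t = ι s}
  zero_mem' := ⟨0, 0, by simp⟩
  one_mem' := ⟨1, 0, by simp⟩
  add_mem' := by
    rintro x y ⟨s1, t1, h1⟩ ⟨s2, t2, h2⟩
    exact ⟨s1 * g ^ t2 + s2 * g ^ t1, t1 + t2, by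
      rw [map_add, map_mul, map_mul, map_pow, map_pow]
      linear_combination (ι g ^ t2) * h1 + (ι g ^ t1) * h2⟩
  neg_mem' := by
    rintro x ⟨s, t, h⟩
    exact ⟨-s, t, by rw [map_neg]; linear_combination -h⟩
  mul_mem' := by
    rintro x y ⟨s1, t1, h1⟩ ⟨s2, t2, h2⟩
    exact ⟨s1 * s2, t1 + t2, by
      rw [map_mul]
      linear_combination (y * ι g ^ t2) * h1 + ι s1 * h2⟩

private lemma mem_locSubring {R L : Type} [CommRing R] [CommRing L] (ι : R →+* L) (g : R)
    (x : L) : x ∈ locSubring ι g ↔ ∃ (s : R) (t : ℕ), x * ι g ^ t = ι s := Iff.rfl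

private lemma coeff_add_mem {L : Type} [CommRing L] (S : Subring L)
    (x y : WittVector 3 L) (hx : ∀ n, x.coeff n ∈ S) (hy : ∀ n, y.coeff n ∈ S) (n : ℕ) :
    (x + y).coeff n ∈ S := by
  rw [WittVector.add_coeff, WittVector.peval, aeval_def]
  apply eval₂_mem
  · intro i _
    exact intCast_mem S _
  · rintro ⟨i, j⟩
    fin_cases i
    · simpa [Function.uncurry] using hx j
    · simpa [Function.uncurry] using hy j

private lemma teich_add_versch_coeff_mem {L : Type} [CommRing L] (S : Subring L)
    (b e : L) (hb : b ∈ S) (he : e ∈ S) (n : ℕ) :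
    (WittVector.teichmuller 3 b +
      WittVector.verschiebung (WittVector.teichmuller 3 e)).coeff n ∈ S := by
  apply coeff_add_mem
  · intro m
    match m with
    | 0 => rw [WittVector.teichmuller_coeff_zero]; exact hb
    | m+1 => rw [WittVector.teichmuller_coeff_pos _ _ _ m.succ_pos]; exact zero_mem _
  · intro m
    match m with
    | 0 => rw [WittVector.verschiebung_coeff_zero]; exact zero_mem _
    | 1 => rw [WittVector.verschiebung_coeff_succ, WittVector.teichmuller_coeff_zero]; exact he
    | m+2 =>
      rw [WittVector.verschiebung_coeff_succ,
        WittVector.teichmuller_coeff_pos _ _ _ m.succ_pos]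
      exact zero_mem _

set_option maxHeartbeats 2000000 in
/-- **Pullback of the local cohomology class along the `α₃`-quotient with an `E₆^0`
singularity** (char 3, `x = Z² − Y⁴`, `y = Y³`, `z = Z³`).
Let `R = k[Y,Z]`, `q = Z² − Y⁴`, `L = R[1/(Yq)]`, and `w = τ(Z³ q⁻¹ Y⁻³) ∈ W(L)`
(3-typical).  Then `w ≡ −V(τ(Z q⁻¹ Y⁻¹))`, i.e. `w + V(τ(Z q⁻¹ Y⁻¹)) ≡ 0`, in `W₂`
modulo `W₂(R[1/q]) + W₂(R[1/Y])`. -/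
theorem alpha3_quotient_E6_pullback (k : Type) [Field k] [CharP k 3]
    (q : MvPolynomial (Fin 2) k) (hq : q = X 1 ^ 2 - X 0 ^ 4)
    (ι : MvPolynomial (Fin 2) k →+*
      Localization.Away ((X 0 : MvPolynomial (Fin 2) k) * q))
    (hι : ι = algebraMap _ _)
    (uY uq : (Localization.Away ((X 0 : MvPolynomial (Fin 2) k) * q))ˣ)
    (huY : (uY : Localization.Away ((X 0 : MvPolynomial (Fin 2) k) * q)) = ι (X 0))
    (huq : (uq : Localization.Away ((X 0 : MvPolynomial (Fin 2) k) * q)) = ι q)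
    (w : WittVector 3 (Localization.Away ((X 0 : MvPolynomial (Fin 2) k) * q)))
    (hw : w = WittVector.teichmuller 3
      (ι (X 1 ^ 3) *
        (↑uq⁻¹ : Localization.Away ((X 0 : MvPolynomial (Fin 2) k) * q)) *
        (↑uY⁻¹ : Localization.Away ((X 0 : MvPolynomial (Fin 2) k) * q)) ^ 3)) :
    ∃ u v : WittVector 3 (Localization.Away ((X 0 : MvPolynomial (Fin 2) k) * q)),
      (∀ i : ℕ, ∃ (s : MvPolynomial (Fin 2) k) (t : ℕ),
        u.coeff i * ι q ^ t = ι s) ∧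
      (∀ i : ℕ, ∃ (s : MvPolynomial (Fin 2) k) (t : ℕ),
        v.coeff i * ι (X 0) ^ t = ι s) ∧
      ∀ i < 2, (w + WittVector.verschiebung
        (WittVector.teichmuller 3
          ((ι (X 1) * ↑uq⁻¹ * ↑uY⁻¹ :
            Localization.Away ((X 0 : MvPolynomial (Fin 2) k) * q)))) - u - v).coeff i
        = 0 := by
  have hQg : (↑uq⁻¹ : Localization.Away ((X 0 : MvPolynomial (Fin 2) k) * q)) * ι q = 1 := by
    rw [← huq]; exact uq.inv_mul
  have hYy : (↑uY⁻¹ : Localization.Away ((X 0 : MvPolynomial (Fin 2) k) * q)) * ι (X 0) = 1 := by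
    rw [← huY]; exact uY.inv_mul
  have h3 : (3 : Localization.Away ((X 0 : MvPolynomial (Fin 2) k) * q)) = 0 := by
    have h := map_natCast ι 3
    rw [CharP.cast_eq_zero (MvPolynomial (Fin 2) k) 3, map_zero] at h
    exact_mod_cast h.symm
  have hg : ι q = ι (X 1) ^ 2 - ι (X 0) ^ 4 := by
    have h := congrArg ι hq
    rwa [map_sub, map_pow, map_pow] at h
  refine ⟨WittVector.teichmuller 3 (ι (X 1) * ι (X 0) * ↑uq⁻¹) +
      WittVector.verschiebung (WittVector.teichmuller 3 (ι (X 1) * ι (X 0) ^ 3 * ↑uq⁻¹ ^ 2)),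
    WittVector.teichmuller 3 (ι (X 1) * ↑uY⁻¹ ^ 3) +
      WittVector.verschiebung (WittVector.teichmuller 3 (ι (X 1) * ↑uY⁻¹ ^ 5)),
    ?_, ?_, ?_⟩
  · intro i
    refine (mem_locSubring ι q _).mp (teich_add_versch_coeff_mem _ _ _ ?_ ?_ i)
    · exact ⟨X 1 * X 0, 1, by
        rw [pow_one, map_mul]; linear_combination (ι (X 1) * ι (X 0)) * hQg⟩
    · exact ⟨X 1 * X 0 ^ 3, 2, by
        rw [map_mul, map_pow]
        linear_combination (ι (X 1) * ι (X 0) ^ 3 * ((↑uq⁻¹ : _) * ι q + 1)) * hQg⟩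
  · intro i
    refine (mem_locSubring ι (X 0) _).mp (teich_add_versch_coeff_mem _ _ _ ?_ ?_ i)
    · exact ⟨X 1, 3, by
        linear_combination (ι (X 1) * (((↑uY⁻¹ : _) * ι (X 0))^2 + (↑uY⁻¹ : _) * ι (X 0) + 1)) * hYy⟩
    · exact ⟨X 1, 5, by
        linear_combination (ι (X 1) * (((↑uY⁻¹ : _) * ι (X 0))^4 + ((↑uY⁻¹ : _) * ι (X 0))^3 +
          ((↑uY⁻¹ : _) * ι (X 0))^2 + (↑uY⁻¹ : _) * ι (X 0) + 1)) * hYy⟩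
  · have hv1 : ∀ x : WittVector 3 (Localization.Away ((X 0 : MvPolynomial (Fin 2) k) * q)),
        (WittVector.verschiebung x).coeff 1 = x.coeff 0 :=
      fun x => WittVector.verschiebung_coeff_add_one x 0
    have key : WittVector.truncate 2 (w + WittVector.verschiebung
          (WittVector.teichmuller 3 ((ι (X 1) * ↑uq⁻¹ * ↑uY⁻¹ :
            Localization.Away ((X 0 : MvPolynomial (Fin 2) k) * q))))) =
        WittVector.truncate 2
          ((WittVector.teichmuller 3 (ι (X 1) * ι (X 0) * ↑uq⁻¹) +
            WittVector.verschiebung (WittVector.teichmuller 3 (ι (X 1) * ι (X 0) ^ 3 * ↑uq⁻¹ ^ 2))) +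
           (WittVector.teichmuller 3 (ι (X 1) * ↑uY⁻¹ ^ 3) +
            WittVector.verschiebung (WittVector.teichmuller 3 (ι (X 1) * ↑uY⁻¹ ^ 5)))) := by
      ext j
      rw [WittVector.coeff_truncate, WittVector.coeff_truncate]
      fin_cases j
      · simp only [Fin.isValue, Fin.val_zero, hw, WittVector.add_coeff_zero,
          WittVector.teichmuller_coeff_zero, WittVector.verschiebung_coeff_zero,
          add_zero, zero_add]
        rw [show ι (X 1 ^ 3) = ι (X 1) ^ 3 from map_pow ι (X 1) 3]
        linear_combination (-(ι (X 1) * (↑uq⁻¹ : _) * (↑uY⁻¹ : _)^3)) * hg +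
          (ι (X 1) * (↑uY⁻¹ : _)^3) * hQg +
          (ι (X 1) * ι (X 0) * (↑uq⁻¹ : _) *
            ((ι (X 0) * (↑uY⁻¹ : _))^2 + ι (X 0) * (↑uY⁻¹ : _) + 1)) * hYy
      · simp only [Fin.isValue, Fin.val_one, hw, myAddCoeffOne, WittVector.add_coeff_zero,
          WittVector.teichmuller_coeff_zero, WittVector.verschiebung_coeff_zero, hv1,
          WittVector.teichmuller_coeff_pos _ _ 1 one_pos,
          add_zero, zero_add]
        linear_combination
          (-(ι (X 1) * ι (X 0) * (↑uq⁻¹ : _) * (↑uY⁻¹ : _)^6)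
            - ι (X 1) * ι (X 0)^2 * (↑uq⁻¹ : _)^2 * (↑uY⁻¹ : _)^3) * hg +
          (ι (X 1) * ι (X 0) * (↑uY⁻¹ : _)^6
            + ι (X 1) * ι (X 0)^2 * (↑uq⁻¹ : _) * (↑uY⁻¹ : _)^3) * hQg +
          (ι (X 1) * (↑uY⁻¹ : _)^5 +
            ι (X 1) * (↑uq⁻¹ : _) * (↑uY⁻¹ : _) * ((ι (X 0) * (↑uY⁻¹ : _))^4
              + (ι (X 0) * (↑uY⁻¹ : _))^3 + (ι (X 0) * (↑uY⁻¹ : _))^2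
              + ι (X 0) * (↑uY⁻¹ : _) + 1) +
            ι (X 1) * (↑uq⁻¹ : _) * (↑uY⁻¹ : _) * (ι (X 0) * (↑uY⁻¹ : _) + 1) +
            ι (X 1) * ι (X 0)^3 * (↑uq⁻¹ : _)^2 * ((ι (X 0) * (↑uY⁻¹ : _))^2
              + ι (X 0) * (↑uY⁻¹ : _) + 1)) * hYy +
          (ι (X 1) * (↑uq⁻¹ : _) * (↑uY⁻¹ : _)) * h3
    intro i hi
    refine (WittVector.mem_ker_truncate 2 _).mp ?_ i hi
    rw [RingHom.mem_ker, map_sub, map_sub, key, map_add, add_sub_cancel_left, sub_self]
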